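/- arXiv:math/0408041 — 2 statements merged into one kernel-verified Lean document; each statement's English description precedes it below -/
import Mathlib

section
/- Let $U\subset\mathbb{C}$ be a domain (open connected set) and suppose there exists an unbounded closed connected set $A\subset U$. Then $\infty$ is accessible from $U$; that is, there exists a curve $\gamma\colon[0,\infty)\to U$ with $|\gamma(t)|\to\infty$ as $t\to\infty$. -/
open Filter Topology

open Set OnePoint


private lemma clopen_bump {T : Type*} [TopologicalSpace T] [CompactSpace T] [T2Space T]
    [PreconnectedSpace T] {Ω : Set T} (hΩ : IsOpen Ω) {x : T} (hx : x ∈ Ω)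
    (hne : Ωᶜ.Nonempty) :
    ∃ q ∈ closure (connectedComponentIn Ω x), q ∉ Ω := by
  by_contra hcon
  push_neg at hcon
  set D := connectedComponentIn Ω x with hD
  have hDsub : D ⊆ Ω := connectedComponentIn_subset _ _
  have hDconn : IsPreconnected D := isPreconnected_connectedComponentIn
  have hxD : x ∈ D := mem_connectedComponentIn hx
  have hDclos : closure D ⊆ Ω := fun q hq => hcon q hq
  have hDcl : IsClosed D := by
    have h1 : closure D ⊆ D :=
      hDconn.closure.subset_connectedComponentIn (subset_closure hxD) hDclos
    exact isClosed_of_closure_subset h1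
  obtain ⟨O, hOo, hDO, hOΩ⟩ := normal_exists_closure_subset hDcl hΩ hDsub
  set K := closure O with hK
  have hKcl : IsClosed K := isClosed_closure
  have hKcomp : IsCompact K := hKcl.isCompact
  have hOK : O ⊆ K := subset_closure
  have hxK : x ∈ K := hOK (hDO hxD)
  have hKΩ : K ⊆ Ω := hOΩ
  have hDK : D = connectedComponentIn K x := by
    apply Subset.antisymm
    · exact hDconn.subset_connectedComponentIn hxD (hDO.trans hOK)
    · exact (isPreconnected_connectedComponentIn).subset_connectedComponentIn
        (mem_connectedComponentIn hxK) ((connectedComponentIn_subset _ _).trans hKΩ)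
  haveI : CompactSpace K := isCompact_iff_compactSpace.mp hKcomp
  set x' : K := ⟨x, hxK⟩
  have himg : D = ((↑) : K → T) '' connectedComponent x' := by
    rw [hDK]; exact connectedComponentIn_eq_image hxK
  set Bd : Set K := ((↑) : K → T) ⁻¹' Oᶜ with hBd
  have hBdcl : IsClosed Bd := (hOo.isClosed_compl).preimage continuous_subtype_val
  have hBdcomp : IsCompact Bd := hBdcl.isCompact
  have hdisj : connectedComponent x' ∩ Bd = ∅ := by
    rw [eq_empty_iff_forall_notMem]
    rintro y ⟨hy1, hy2⟩
    exact hy2 (hDO (himg ▸ mem_image_of_mem _ hy1))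
  obtain ⟨E, hEclopen, hxE, hEBd⟩ :
      ∃ E : Set K, IsClopen E ∧ x' ∈ E ∧ E ∩ Bd = ∅ := by
    have H1 := hBdcomp.inter_iInter_nonempty
      (fun s : { s : Set K // IsClopen s ∧ x' ∈ s } => (s : Set K)) fun s => s.2.1.1
    have hiInter : (⋂ s : { s : Set K // IsClopen s ∧ x' ∈ s }, (s : Set K))
        = connectedComponent x' := (connectedComponent_eq_iInter_isClopen x').symm
    have hfalse : ¬ (Bd ∩ ⋂ s : { s : Set K // IsClopen s ∧ x' ∈ s }, (s : Set K)).Nonempty := by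
      rw [hiInter, not_nonempty_iff_eq_empty, inter_comm]
      exact hdisj
    have H2 := mt H1 hfalse
    push_neg at H2
    obtain ⟨u, hu⟩ := H2
    refine ⟨⋂ s ∈ u, (s : Set K), isClopen_biInter_finset fun s _ => s.2.1,
      mem_iInter₂.2 fun s _ => s.2.2, ?_⟩
    rw [inter_comm]; exact hu
  have hEsubO : ((↑) : K → T) '' E ⊆ O := by
    rintro _ ⟨y, hyE, rfl⟩
    by_contra hyO
    exact (eq_empty_iff_forall_notMem.mp hEBd y) ⟨hyE, hyO⟩
  obtain ⟨V, hVo, hVE⟩ := isOpen_induced_iff.mp hEclopen.2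
  have hEim : ((↑) : K → T) '' E = K ∩ V := by
    rw [← hVE, Subtype.image_preimage_coe]
  have himO : ((↑) : K → T) '' E = O ∩ V := by
    apply Subset.antisymm
    · intro y hy; exact ⟨hEsubO hy, (hEim ▸ hy : y ∈ K ∩ V).2⟩
    · intro y hy; rw [hEim]; exact ⟨hOK hy.1, hy.2⟩
  have hEopen : IsOpen (((↑) : K → T) '' E) := himO ▸ hOo.inter hVo
  have hEclosed : IsClosed (((↑) : K → T) '' E) :=
    (hEclopen.1.isCompact.image continuous_subtype_val).isClosed
  rcases isClopen_iff.mp ⟨hEclosed, hEopen⟩ with h | h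
  · exact absurd (h ▸ mem_image_of_mem _ hxE) (notMem_empty x)
  · obtain ⟨y, hy⟩ := hne
    have : y ∈ O := hEsubO (h ▸ mem_univ y)
    exact hy (hKΩ (hOK this))


private lemma clopen_bump_set {T : Type*} [TopologicalSpace T] [T2Space T] {S V : Set T}
    (hScomp : IsCompact S) (hSconn : IsPreconnected S) (hV : IsOpen V) {x : T}
    (hxS : x ∈ S) (hxV : x ∈ V) (hne : (S \ V).Nonempty) :
    ∃ q ∈ closure (connectedComponentIn (S ∩ V) x), q ∉ V := by
  haveI : CompactSpace S := isCompact_iff_compactSpace.mp hScomp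
  haveI : PreconnectedSpace S := Subtype.preconnectedSpace hSconn
  set Ω : Set S := ((↑) : S → T) ⁻¹' V with hΩdef
  have hΩo : IsOpen Ω := hV.preimage continuous_subtype_val
  set x' : S := ⟨x, hxS⟩ with hx'def
  have hx' : x' ∈ Ω := hxV
  have hnec : Ωᶜ.Nonempty := by
    obtain ⟨y, hyS, hyV⟩ := hne
    exact ⟨⟨y, hyS⟩, hyV⟩
  have hDS : connectedComponentIn (S ∩ V) x ⊆ S :=
    (connectedComponentIn_subset _ _).trans inter_subset_left
  have himg : ((↑) : S → T) '' connectedComponentIn Ω x' = connectedComponentIn (S ∩ V) x := by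
    apply Subset.antisymm
    · apply (isPreconnected_connectedComponentIn.image _
        continuous_subtype_val.continuousOn).subset_connectedComponentIn
      · exact mem_image_of_mem _ (mem_connectedComponentIn hx')
      · rintro _ ⟨y, hy, rfl⟩
        exact ⟨y.2, connectedComponentIn_subset Ω x' hy⟩
    · intro y hy
      set D := connectedComponentIn (S ∩ V) x with hDdef
      have him2 : ((↑) : S → T) '' (((↑) : S → T) ⁻¹' D) = D := by
        rw [Subtype.image_preimage_coe, inter_eq_self_of_subset_right hDS]
      have hpre : IsPreconnected (((↑) : S → T) ⁻¹' D) := by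
        rw [← IsInducing.subtypeVal.isPreconnected_image, him2]
        exact isPreconnected_connectedComponentIn
      have hsub : ((↑) : S → T) ⁻¹' D ⊆ Ω := fun z hz =>
        (connectedComponentIn_subset _ _ hz).2
      have hxmem : x' ∈ ((↑) : S → T) ⁻¹' D := mem_connectedComponentIn ⟨hxS, hxV⟩
      have := hpre.subset_connectedComponentIn hxmem hsub
      have hyD : y ∈ ((↑) : S → T) '' (((↑) : S → T) ⁻¹' D) := by rw [him2]; exact hy
      obtain ⟨z, hz, rfl⟩ := hyD
      exact mem_image_of_mem _ (this hz)
  obtain ⟨q', hq'cl, hq'Ω⟩ := clopen_bump hΩo hx' hnec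
  refine ⟨(q' : T), ?_, hq'Ω⟩
  have : (q' : T) ∈ ((↑) : S → T) '' closure (connectedComponentIn Ω x') :=
    mem_image_of_mem _ hq'cl
  have h2 := (image_closure_subset_closure_image (continuous_subtype_val)) this
  rwa [himg] at h2


private lemma unbounded_iff' {A : Set ℂ} :
    ¬ Bornology.IsBounded A ↔ ∀ r : ℝ, ∃ z ∈ A, r < ‖z‖ := by
  rw [Metric.isBounded_iff_subset_closedBall (0 : ℂ)]
  simp only [not_exists, Set.not_subset, Metric.mem_closedBall, Complex.dist_eq, sub_zero,
    not_le]

private lemma exists_far_continuum {A : Set ℂ} (hcl : IsClosed A) (hconn : IsConnected A)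
    (hub : ¬ Bornology.IsBounded A) (R : ℝ) :
    ∃ B : Set ℂ, B ⊆ A ∧ IsClosed B ∧ IsConnected B ∧ ¬ Bornology.IsBounded B ∧
      ∀ z ∈ B, R ≤ ‖z‖ := by
  by_cases hinter : (A ∩ Metric.closedBall 0 R).Nonempty
  case neg =>
    refine ⟨A, Subset.rfl, hcl, hconn, hub, fun z hz => ?_⟩
    by_contra hlt
    push_neg at hlt
    exact hinter ⟨z, hz, by
      simp only [Metric.mem_closedBall, Complex.dist_eq, sub_zero]
      exact hlt.le⟩
  case pos =>
  set i : ℂ → OnePoint ℂ := ((↑) : ℂ → OnePoint ℂ) with hidef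
  set S : Set (OnePoint ℂ) := i '' A ∪ {∞} with hSdef
  have hpre : i ⁻¹' S = A := by
    rw [hSdef, preimage_union, preimage_image_eq _ OnePoint.coe_injective,
      OnePoint.coe_preimage_infty, union_empty]
  have hSmem : (∞ : OnePoint ℂ) ∈ S := mem_union_right _ rfl
  have hScl : IsClosed S := by
    rw [OnePoint.isClosed_iff_of_mem hSmem, hpre]
    exact hcl
  have hScomp : IsCompact S := hScl.isCompact
  have hinfty_cl : ∀ C : Set ℂ, ¬ Bornology.IsBounded C → (∞ : OnePoint ℂ) ∈ closure (i '' C) := by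
    intro C hC
    rw [mem_closure_iff]
    intro N hNo hN
    obtain ⟨hcl', hcomp'⟩ := (OnePoint.isOpen_iff_of_mem hN).mp hNo
    obtain ⟨z, hzC, hz⟩ := unbounded_iff'.mp hC (sSup (norm '' (i ⁻¹' N)ᶜ) ⊔ 0)
    have hzc : z ∈ i ⁻¹' N := by
      by_contra hzc
      have hb : ‖z‖ ≤ sSup (norm '' (i ⁻¹' N)ᶜ) := by
        apply le_csSup
        · exact (hcomp'.image continuous_norm).bddAbove
        · exact mem_image_of_mem _ hzc
      exact absurd hz (not_lt.mpr (hb.trans (le_sup_left.trans (le_of_eq rfl)))) 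
    exact ⟨i z, hzc, mem_image_of_mem _ hzC⟩
  have hSconn : IsPreconnected S := by
    have h1 : S = closure (i '' A) := by
      apply Subset.antisymm
      · apply union_subset subset_closure
        intro y hy
        rw [mem_singleton_iff] at hy
        subst hy
        exact hinfty_cl A hub
      · exact closure_minimal subset_union_left hScl
    rw [h1]
    exact (hconn.isPreconnected.image i (OnePoint.continuous_coe).continuousOn).closure
  set V : Set (OnePoint ℂ) := (i '' Metric.closedBall 0 R)ᶜ with hVdef
  have hVo : IsOpen V := OnePoint.isOpen_compl_image_coe.mpr
    ⟨Metric.isClosed_closedBall, ProperSpace.isCompact_closedBall 0 R⟩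
  have hxS : (∞ : OnePoint ℂ) ∈ S := hSmem
  have hxV : (∞ : OnePoint ℂ) ∈ V := OnePoint.infty_notMem_image_coe
  have hne : (S \ V).Nonempty := by
    obtain ⟨z, hzA, hzB⟩ := hinter
    exact ⟨i z, mem_union_left _ (mem_image_of_mem _ hzA),
      fun h => h (mem_image_of_mem _ hzB)⟩
  obtain ⟨q, hqcl, hqV⟩ := clopen_bump_set hScomp hSconn hVo hxS hxV hne
  set E : Set (OnePoint ℂ) := closure (connectedComponentIn (S ∩ V) ∞) with hEdef
  have hEcl : IsClosed E := isClosed_closure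
  have hEcomp : IsCompact E := hEcl.isCompact
  have hEconn : IsPreconnected E := isPreconnected_connectedComponentIn.closure
  have hinftyE : (∞ : OnePoint ℂ) ∈ E := subset_closure (mem_connectedComponentIn ⟨hxS, hxV⟩)
  have hEfar : ∀ z : ℂ, i z ∈ E → z ∈ A ∧ R ≤ ‖z‖ := by
    intro z hz
    have h1 : E ⊆ closure (S ∩ V) := closure_mono (connectedComponentIn_subset _ _)
    have h2 : closure (S ∩ V) ⊆ S ∩ (i '' Metric.ball 0 R)ᶜ := by
      apply closure_minimal
      · apply inter_subset_inter Subset.rfl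
        intro y hy hmem
        obtain ⟨w, hw, rfl⟩ := hmem
        exact hy (mem_image_of_mem _ (Metric.ball_subset_closedBall hw))
      · exact hScl.inter (isOpen_image_coe.mpr Metric.isOpen_ball).isClosed_compl
    obtain ⟨hzS, hzV⟩ := h2 (h1 hz)
    constructor
    · rcases hzS with hzS | hzS
      · obtain ⟨w, hw, hweq⟩ := hzS
        rwa [← OnePoint.coe_injective hweq]
      · exact absurd hzS (OnePoint.coe_ne_infty z)
    · by_contra hlt
      push_neg at hlt
      exact hzV (mem_image_of_mem _ (by
        simp only [Metric.mem_ball, Complex.dist_eq, sub_zero]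
        exact hlt))
  have hqE : q ∈ E := hqcl
  have hqne : q ≠ ∞ := by
    intro h
    subst h
    exact hqV hxV
  obtain ⟨q0, rfl⟩ := OnePoint.ne_infty_iff_exists.mp hqne
  obtain ⟨q2, hq2cl, hq2V⟩ := clopen_bump_set hEcomp hEconn (isClosed_singleton (x := (∞ : OnePoint ℂ))).isOpen_compl hqE
    hqne ⟨∞, hinftyE, by simp⟩
  have hq2eq : q2 = ∞ := by simpa using hq2V
  subst hq2eq
  set F : Set (OnePoint ℂ) := E ∩ ({∞}ᶜ : Set (OnePoint ℂ)) with hFdef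
  set D : Set (OnePoint ℂ) := connectedComponentIn F (i q0) with hDdef
  have hDsub : D ⊆ F := connectedComponentIn_subset _ _
  have hDrange : D ⊆ range i := fun y hy => by
    have h5 := (hDsub hy).2
    rw [OnePoint.compl_infty] at h5
    exact h5
  set B : Set ℂ := i ⁻¹' D with hBdef
  have hBD : i '' B = D := image_preimage_eq_of_subset hDrange
  have hqF : i q0 ∈ F := ⟨hqE, hqne⟩
  have hBsubA : B ⊆ A := fun z hz => (hEfar z (hDsub hz).1).1
  have hBfar : ∀ z ∈ B, R ≤ ‖z‖ := fun z hz => (hEfar z (hDsub hz).1).2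
  have hBconn : IsPreconnected B := by
    rw [← (OnePoint.isOpenEmbedding_coe).isInducing.isPreconnected_image, hBD]
    exact isPreconnected_connectedComponentIn
  have hBne : B.Nonempty := ⟨q0, mem_connectedComponentIn hqF⟩
  have hBcl : IsClosed B := by
    have hDD : D = Subtype.val '' connectedComponent (⟨i q0, hqF⟩ : F) :=
      connectedComponentIn_eq_image hqF
    obtain ⟨Z, hZcl, hZeq⟩ := isClosed_induced_iff.mp
      (isClosed_connectedComponent (x := (⟨i q0, hqF⟩ : F)))
    have hDFZ : D = F ∩ Z := by
      rw [hDD, ← hZeq, Subtype.image_preimage_coe]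
    have : B = i ⁻¹' (E ∩ Z) := by
      rw [hBdef, hDFZ, hFdef]
      ext z
      simp only [mem_preimage, mem_inter_iff, mem_compl_iff, mem_singleton_iff]
      exact ⟨fun h => ⟨h.1.1, h.2⟩, fun h => ⟨⟨h.1, OnePoint.coe_ne_infty z⟩, h.2⟩⟩
    rw [this]
    exact (hEcl.inter hZcl).preimage OnePoint.continuous_coe
  have hBub : ¬ Bornology.IsBounded B := by
    rw [unbounded_iff']
    intro r
    have hcls : (∞ : OnePoint ℂ) ∈ closure D := hq2cl
    have hNo : IsOpen ((i '' Metric.closedBall 0 r)ᶜ) := OnePoint.isOpen_compl_image_coe.mpr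
      ⟨Metric.isClosed_closedBall, isCompact_closedBall 0 r⟩
    have hN : (∞ : OnePoint ℂ) ∈ (i '' Metric.closedBall 0 r)ᶜ := OnePoint.infty_notMem_image_coe
    obtain ⟨y, hyN, hyD⟩ := mem_closure_iff.mp hcls _ hNo hN
    obtain ⟨z, hz, rfl⟩ := hDrange hyD
    refine ⟨z, hyD, ?_⟩
    by_contra hlt
    push_neg at hlt
    exact hyN (mem_image_of_mem _ (by
      simp only [Metric.mem_closedBall, Complex.dist_eq, sub_zero]
      exact hlt))
  exact ⟨B, hBsubA, hBcl, ⟨hBne, hBconn⟩, hBub, hBfar⟩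
/-- If a domain `U ⊆ ℂ` contains an unbounded closed connected set `A`,
then `∞` is accessible from `U`: there is a curve in `U` tending to `∞`. -/
theorem infinity_accessible (U : Set ℂ) (hUo : IsOpen U) (hUc : IsConnected U)
    (A : Set ℂ) (hAU : A ⊆ U) (hAcl : IsClosed A) (hAconn : IsConnected A)
    (hAub : ¬ Bornology.IsBounded A) :
    ∃ γ : ℝ → ℂ, ContinuousOn γ (Set.Ici 0) ∧ (∀ t ∈ Set.Ici (0:ℝ), γ t ∈ U) ∧
      Tendsto (fun t => ‖γ t‖) atTop atTop := by
  by_cases hUuniv : Uᶜ.Nonempty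
  case neg =>
    refine ⟨fun t => (t : ℂ), Complex.continuous_ofReal.continuousOn, fun t _ => ?_, ?_⟩
    · rcases not_nonempty_iff_eq_empty.mp hUuniv |> compl_empty_iff.mp with rfl
      exact mem_univ _
    · simp only [Complex.norm_real, Real.norm_eq_abs]
      exact tendsto_abs_atTop_atTop
  case pos =>
  -- a chooser for far continua
  have key : ∀ p : Set ℂ × ℝ, ∃ B' : Set ℂ,
      (IsClosed p.1 ∧ IsConnected p.1 ∧ ¬ Bornology.IsBounded p.1) →
      (B' ⊆ p.1 ∧ IsClosed B' ∧ IsConnected B' ∧ ¬ Bornology.IsBounded B' ∧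
        ∀ z ∈ B', p.2 ≤ ‖z‖) := by
    intro p
    by_cases h : IsClosed p.1 ∧ IsConnected p.1 ∧ ¬ Bornology.IsBounded p.1
    · obtain ⟨B, hB1, hB2, hB3, hB4, hB5⟩ := exists_far_continuum h.1 h.2.1 h.2.2 p.2
      exact ⟨B, fun _ => ⟨hB1, hB2, hB3, hB4, hB5⟩⟩
    · exact ⟨∅, fun h' => absurd h' h⟩
  choose f hf using key
  set Bf : ℕ → Set ℂ := fun n => Nat.rec A (fun k Bk => f (Bk, (k : ℝ) + 1)) n with hBfdef
  have hstep : ∀ n, Bf (n + 1) = f (Bf n, (n : ℝ) + 1) := fun n => rfl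
  have hInv : ∀ n, IsClosed (Bf n) ∧ IsConnected (Bf n) ∧ ¬ Bornology.IsBounded (Bf n) ∧
      Bf n ⊆ A := by
    intro n
    induction n with
    | zero => exact ⟨hAcl, hAconn, hAub, Subset.rfl⟩
    | succ k ih =>
      have h := hf (Bf k, (k : ℝ) + 1) ⟨ih.1, ih.2.1, ih.2.2.1⟩
      rw [← hstep k] at h
      exact ⟨h.2.1, h.2.2.1, h.2.2.2.1, h.1.trans ih.2.2.2⟩
  have hfar : ∀ n : ℕ, ∀ z ∈ Bf (n + 1), (n : ℝ) + 1 ≤ ‖z‖ := by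
    intro n
    have h := hf (Bf n, (n : ℝ) + 1) ⟨(hInv n).1, (hInv n).2.1, (hInv n).2.2.1⟩
    rw [← hstep n] at h
    exact h.2.2.2.2
  have hsub : ∀ n : ℕ, Bf (n + 1) ⊆ Bf n := by
    intro n
    have h := hf (Bf n, (n : ℝ) + 1) ⟨(hInv n).1, (hInv n).2.1, (hInv n).2.2.1⟩
    rw [← hstep n] at h
    exact h.1
  choose c hc using fun n => (hInv (n + 1)).2.1.nonempty
  -- fattened neighborhoods
  set r : ℂ → ℝ := fun z => min (Metric.infDist z Uᶜ) 1 with hrdef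
  have hrpos : ∀ z ∈ U, 0 < r z := by
    intro z hz
    refine lt_min ?_ zero_lt_one
    exact (hUo.isClosed_compl.notMem_iff_infDist_pos hUuniv).mp (by simpa using hz)
  set W : ℕ → Set ℂ := fun n => ⋃ z ∈ Bf (n + 1), Metric.ball z (r z) with hWdef
  have hWopen : ∀ n, IsOpen (W n) := fun n => isOpen_biUnion fun z _ => Metric.isOpen_ball
  have hWU : ∀ n, W n ⊆ U := by
    intro n w hw
    obtain ⟨z, hz, hwz⟩ := mem_iUnion₂.mp hw
    have h1 : Metric.ball z (r z) ⊆ Metric.ball z (Metric.infDist z Uᶜ) :=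
      Metric.ball_subset_ball (min_le_left _ _)
    exact Metric.ball_infDist_compl_subset (h1 hwz)
  have hWfar : ∀ n : ℕ, ∀ w ∈ W n, (n : ℝ) < ‖w‖ := by
    intro n w hw
    obtain ⟨z, hz, hwz⟩ := mem_iUnion₂.mp hw
    have h1 : dist w z < 1 := lt_of_lt_of_le (Metric.mem_ball.mp hwz) (min_le_right _ _)
    have h2 : (n : ℝ) + 1 ≤ ‖z‖ := hfar n z hz
    have h3 : ‖z‖ - ‖w‖ ≤ dist w z := by
      rw [dist_comm, Complex.dist_eq]
      exact norm_sub_norm_le _ _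
    linarith
  have hBW : ∀ n, Bf (n + 1) ⊆ W n := by
    intro n z hz
    exact mem_biUnion hz (Metric.mem_ball_self (hrpos z (hAU ((hInv (n + 1)).2.2.2 hz))))
  have hWconn : ∀ n, IsPreconnected (W n) := by
    intro n
    have hW' : W n = ⋃₀ ((fun z => Bf (n + 1) ∪ Metric.ball z (r z)) '' Bf (n + 1)) := by
      rw [sUnion_image]
      apply Subset.antisymm
      · intro w hw
        obtain ⟨z, hz, hwz⟩ := mem_iUnion₂.mp hw
        exact mem_iUnion₂.mpr ⟨z, hz, mem_union_right _ hwz⟩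
      · intro w hw
        obtain ⟨z, hz, hwz⟩ := mem_iUnion₂.mp hw
        rcases hwz with hw1 | hw2
        · exact hBW n hw1
        · exact mem_iUnion₂.mpr ⟨z, hz, hw2⟩
    rw [hW']
    apply isPreconnected_sUnion (c n)
    · rintro s ⟨z, hz, rfl⟩
      exact mem_union_left _ (hc n)
    · rintro s ⟨z, hz, rfl⟩
      exact IsPreconnected.union z hz
        (Metric.mem_ball_self (hrpos z (hAU ((hInv (n + 1)).2.2.2 hz))))
        (hInv (n + 1)).2.1.isPreconnected (convex_ball z (r z)).isPreconnected
  have hWpath : ∀ n, IsPathConnected (W n) := by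
    intro n
    exact (hWopen n).isConnected_iff_isPathConnected.mp ⟨⟨c n, hBW n (hc n)⟩, hWconn n⟩
  have hjoin : ∀ n : ℕ, JoinedIn (W n) (c n) (c (n + 1)) := by
    intro n
    exact (hWpath n).joinedIn (c n) (hBW n (hc n)) (c (n + 1)) (hBW n (hsub (n + 1) (hc (n + 1))))
  choose P hP using hjoin
  set g : ℕ → ℝ → ℂ := fun n t => P n (projIcc (0 : ℝ) 1 zero_le_one (t - n)) with hgdef
  set γ : ℝ → ℂ := fun t => g ⌊t⌋₊ t with hγdef
  have hgcont : ∀ n, Continuous (g n) := fun n =>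
    (P n).continuous.comp (continuous_projIcc.comp (continuous_id.sub continuous_const))
  have hgl : ∀ n : ℕ, g n (n : ℝ) = c n := by
    intro n
    show (P n) (projIcc (0 : ℝ) 1 zero_le_one ((n : ℝ) - n)) = c n
    rw [sub_self, projIcc_left]
    exact (P n).source
  have hgr : ∀ n : ℕ, g n ((n : ℝ) + 1) = c (n + 1) := by
    intro n
    show (P n) (projIcc (0 : ℝ) 1 zero_le_one ((n : ℝ) + 1 - n)) = c (n + 1)
    rw [add_sub_cancel_left, projIcc_right]
    exact (P n).target
  have hγeq : ∀ n : ℕ, ∀ t ∈ Icc (n : ℝ) ((n : ℝ) + 1), γ t = g n t := by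
    intro n t ht
    rcases lt_or_eq_of_le ht.2 with hlt | heq
    · have hfl : ⌊t⌋₊ = n := by
        rw [Nat.floor_eq_iff ((n.cast_nonneg).trans ht.1)]
        exact ⟨ht.1, hlt⟩
      show g ⌊t⌋₊ t = g n t
      rw [hfl]
    · have hteq : t = ((n + 1 : ℕ) : ℝ) := by push_cast; exact heq
      have hfl : ⌊t⌋₊ = n + 1 := by rw [hteq, Nat.floor_natCast]
      show g ⌊t⌋₊ t = g n t
      rw [hfl, heq, hgr n]
      have : ((n : ℝ) + 1) = ((n + 1 : ℕ) : ℝ) := by push_cast; ring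
      rw [this, hgl (n + 1)]
  have hγmem : ∀ t : ℝ, γ t ∈ W ⌊t⌋₊ := fun t => hP ⌊t⌋₊ _
  have hIcc : ∀ n : ℕ, ContinuousOn γ (Icc (n : ℝ) ((n : ℝ) + 1)) := fun n =>
    (hgcont n).continuousOn.congr (hγeq n)
  refine ⟨γ, ?_, fun t _ => hWU _ (hγmem t), ?_⟩
  · intro t ht
    have ht0 : (0 : ℝ) ≤ t := ht
    have hlow : (⌊t⌋₊ : ℝ) ≤ t := Nat.floor_le ht0
    have hupp : t < (⌊t⌋₊ : ℝ) + 1 := Nat.lt_floor_add_one t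
    rcases eq_or_lt_of_le hlow with heq | hlt
    · rcases Nat.eq_zero_or_pos ⌊t⌋₊ with h0 | hpos
      · have ht00 : t = 0 := by rw [← heq, h0]; norm_num
        subst ht00
        apply ((hIcc 0).continuousWithinAt (by norm_num)).mono_of_mem_nhdsWithin
        apply mem_of_superset (inter_mem_nhdsWithin (Ici 0) (Iio_mem_nhds one_pos))
        intro s hs
        norm_num at hs ⊢
        exact ⟨hs.1, hs.2.le⟩
      · obtain ⟨m, hm⟩ := Nat.exists_eq_succ_of_ne_zero hpos.ne'
        have htm : t = (m : ℝ) + 1 := by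
          rw [← heq, hm]; push_cast; ring
        have hleft : ContinuousWithinAt γ (Iic t) t := by
          apply ((hIcc m).continuousWithinAt ⟨by rw [htm]; linarith [Nat.cast_nonneg (α := ℝ) m],
            by rw [htm]⟩).mono_of_mem_nhdsWithin
          apply mem_of_superset (inter_mem_nhdsWithin (Iic t)
            (Ioi_mem_nhds (by rw [htm]; linarith : (m : ℝ) < t)))
          rintro s ⟨hs1, hs2⟩
          exact ⟨le_of_lt hs2, by rw [← htm]; exact hs1⟩
        have hright : ContinuousWithinAt γ (Ici t) t := by
          apply ((hIcc (m + 1)).continuousWithinAt ⟨by rw [htm]; push_cast; exact le_rfl,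
            by rw [htm]; push_cast; linarith⟩).mono_of_mem_nhdsWithin
          apply mem_of_superset (inter_mem_nhdsWithin (Ici t)
            (Iio_mem_nhds (by linarith : t < t + 1)))
          rintro s ⟨hs1, hs2⟩
          rw [htm] at hs1 hs2
          constructor
          · push_cast
            exact hs1
          · push_cast
            exact le_of_lt hs2
        exact (hleft.union hright).mono (fun s _ => le_total s t |>.imp id id)
    · apply ((hIcc ⌊t⌋₊).continuousWithinAt ⟨hlow, hupp.le⟩).mono_of_mem_nhdsWithin
      apply mem_of_superset (inter_mem_nhdsWithin (Ici 0) (Ioo_mem_nhds hlt hupp))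
      rintro s ⟨_, hs2⟩
      exact ⟨hs2.1.le, hs2.2.le⟩
  · have hev : (fun t => t - 1) ≤ᶠ[atTop] fun t => ‖γ t‖ := by
      filter_upwards [eventually_ge_atTop (0 : ℝ)] with t ht
      have h1 : (⌊t⌋₊ : ℝ) < ‖γ t‖ := hWfar _ _ (hγmem t)
      have h2 : t < (⌊t⌋₊ : ℝ) + 1 := Nat.lt_floor_add_one t
      linarith
    have hf1 : Tendsto (fun t : ℝ => t - 1) atTop atTop := by
      simpa [sub_eq_add_neg] using tendsto_atTop_add_const_right atTop (-1 : ℝ) tendsto_id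
    exact tendsto_atTop_mono' atTop hev hf1
end

section
/- Let $f\in\mathcal{B}$ and let $A\subset\mathbb{C}$ be an extendable set. Then there exists $T>0$ such that every connected component of $\{z\in A\cap f^{-1}(A): |z|\geq T\}$ is contained in a single fundamental domain of $f$; consequently, if $C\subset A\cap f^{-1}(A)$ is connected and meets the disk of radius $T$, then $C\setminus\mathbb{D}_T(0)$ is contained in finitely many fundamental domains. -/
open Filter Topology Set

noncomputable section

/-- The critical values of an entire function. -/
def CriticalValues (f : ℂ → ℂ) : Set ℂ := f '' {z | deriv f z = 0}

/-- The (finite) asymptotic values of an entire function: limits of `f` along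
curves tending to infinity. -/
def AsymptoticValues (f : ℂ → ℂ) : Set ℂ :=
  {a | ∃ γ : ℝ → ℂ, Continuous γ ∧
    Tendsto (fun t => ‖γ t‖) atTop atTop ∧
    Tendsto (fun t => f (γ t)) atTop (𝓝 a)}

/-- The set of singular values `S(f)`: the closure of the set of critical and
asymptotic values. -/
def SingularValues (f : ℂ → ℂ) : Set ℂ :=
  closure (CriticalValues f ∪ AsymptoticValues f)

/-- An entire function is transcendental if it is not a polynomial. -/
def TranscendentalEntire (f : ℂ → ℂ) : Prop :=
  ¬ ∃ p : Polynomial ℂ, ∀ z, f z = p.eval z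

/-- The Eremenko–Lyubich class `𝓑`: transcendental entire functions with
bounded set of singular values. -/
def EremenkoLyubich (f : ℂ → ℂ) : Prop :=
  Differentiable ℂ f ∧ TranscendentalEntire f ∧ Bornology.IsBounded (SingularValues f)

/-- Data for cutting the tracts of `f` into fundamental domains: `K` exceeds
`|f 0|` and all singular values, and `Γ` is a closed connected unbounded curve
in `{|z| ≥ K}` meeting `{|z| = K}` and disjoint from all tracts
(i.e. from `f ⁻¹' {|z| > K}`). -/
def IsCuttingCurve (f : ℂ → ℂ) (K : ℝ) (Γ : Set ℂ) : Prop :=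
  ‖f 0‖ < K ∧ (∀ s ∈ SingularValues f, ‖s‖ < K) ∧
  IsClosed Γ ∧ IsConnected Γ ∧ ¬ Bornology.IsBounded Γ ∧
  Γ ⊆ {z : ℂ | K ≤ ‖z‖} ∧ (∃ z ∈ Γ, ‖z‖ = K) ∧
  Γ ∩ f ⁻¹' {z : ℂ | K < ‖z‖} = ∅

/-- A fundamental domain of `f` (relative to the cutting data `K`, `Γ`): a
connected component of `f ⁻¹' ({|z| > K} \ Γ)`. -/
def IsFundamentalDomain (f : ℂ → ℂ) (K : ℝ) (Γ F : Set ℂ) : Prop :=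
  ∃ z₀ ∈ F, F = connectedComponentIn (f ⁻¹' ({z : ℂ | K < ‖z‖} \ Γ)) z₀

/-- A set `A ⊆ ℂ` is extendable for `f` if `|f(z)| → ∞` as `z → ∞` in `A`. -/
def Extendable (f : ℂ → ℂ) (A : Set ℂ) : Prop :=
  ∀ z : ℕ → ℂ, (∀ n, z n ∈ A) →
    Tendsto (fun n => ‖z n‖) atTop atTop →
    Tendsto (fun n => ‖f (z n)‖) atTop atTop

/-- For `f ∈ 𝓑` and an extendable set `A`, there is `T > 0` such that every
connected component of `{z ∈ A ∩ f⁻¹(A) : |z| ≥ T}` is contained in a single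
fundamental domain; consequently, any connected `C ⊆ A ∩ f⁻¹(A)` meeting
`𝔻_T(0)` has `C \ 𝔻_T(0)` contained in finitely many fundamental domains. -/
theorem extendable_in_finitely_many_fundamental_domains
    (f : ℂ → ℂ) (hf : EremenkoLyubich f) (A : Set ℂ) (hA : Extendable f A)
    (K : ℝ) (Γ : Set ℂ) (hcut : IsCuttingCurve f K Γ) :
    ∃ T > 0,
      (∀ z ∈ A ∩ f ⁻¹' A, T ≤ ‖z‖ →
        ∃ F : Set ℂ, IsFundamentalDomain f K Γ F ∧
          connectedComponentIn {w ∈ A ∩ f ⁻¹' A | T ≤ ‖w‖} z ⊆ F) ∧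
      ∀ C ⊆ A ∩ f ⁻¹' A, IsConnected C → (C ∩ Metric.ball (0 : ℂ) T).Nonempty →
        ∃ (k : ℕ) (F : Fin k → Set ℂ), (∀ j, IsFundamentalDomain f K Γ (F j)) ∧
          C \ Metric.ball (0 : ℂ) T ⊆ ⋃ j, F j := by
  
  obtain ⟨hdiff, htrans, hbdd⟩ := hf
  obtain ⟨hf0, hsing, hΓcl, hΓconn, hΓunb, hΓsub, hΓcirc, hΓdisj⟩ := hcut
  have hfc : Continuous f := hdiff.continuous
  have habsf : Continuous fun z => ‖f z‖ :=
    continuous_norm.comp hfc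
  --量化形式 of extendability
  have EXT : ∀ M : ℝ, ∃ R : ℝ, ∀ z ∈ A, R ≤ ‖z‖ → M < ‖f z‖ := by
    intro M
    by_contra h
    push_neg at h
    choose z hzA hzR hzM using fun n : ℕ => h (n : ℝ)
    have h1 : Tendsto (fun n => ‖z n‖) atTop atTop :=
      tendsto_atTop_mono hzR tendsto_natCast_atTop_atTop
    obtain ⟨n, hn⟩ := ((hA z hzA h1).eventually_gt_atTop M).exists
    exact absurd hn (not_lt.mpr (hzM n))
  set U : Set ℂ := f ⁻¹' ({z : ℂ | K < ‖z‖} \ Γ) with hU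
  have hUopen : IsOpen U := by
    rw [hU]
    exact ((isOpen_lt continuous_const continuous_norm).sdiff hΓcl).preimage hfc
  obtain ⟨R₁, hR₁⟩ := EXT (K + 1)
  set Q : ℝ := max R₁ (K + 2) with hQdef
  obtain ⟨R₂, hR₂⟩ := EXT Q
  set T : ℝ := max R₂ 1 with hTdef
  have hTpos : (0 : ℝ) < T := lt_of_lt_of_le one_pos (le_max_right _ _)
  -- the moat fact
  have key₂ : ∀ z : ℂ, z ∈ A → f z ∈ A → Q ≤ ‖f z‖ →
      z ∈ U ∧ K + 1 < ‖f (f z)‖ := by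
    intro z hzA hfzA hQle
    have h1 : K + 1 < ‖f (f z)‖ :=
      hR₁ (f z) hfzA (le_trans (le_max_left _ _) hQle)
    have hK2 : K + 2 ≤ ‖f z‖ := le_trans (le_max_right _ _) hQle
    have hKfz : K < ‖f z‖ := by linarith
    have hnotΓ : f z ∉ Γ := by
      intro hmem
      have hx : f z ∈ Γ ∩ f ⁻¹' {z : ℂ | K < ‖z‖} :=
        ⟨hmem, by simp only [mem_preimage, mem_setOf_eq]; linarith⟩
      rw [hΓdisj] at hx
      exact hx
    refine ⟨?_, h1⟩
    rw [hU]
    exact ⟨hKfz, hnotΓ⟩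
  have key₁ : ∀ z : ℂ, z ∈ A → f z ∈ A → T ≤ ‖z‖ →
      z ∈ U ∧ Q < ‖f z‖ := by
    intro z hzA hfzA hTle
    have hQlt : Q < ‖f z‖ := hR₂ z hzA (le_trans (le_max_left _ _) hTle)
    exact ⟨(key₂ z hzA hfzA hQlt.le).1, hQlt⟩
  have hball : ∀ y : ℂ, y ∉ Metric.ball (0 : ℂ) T → T ≤ ‖y‖ := by
    intro y hy
    have := Metric.mem_ball.not.mp hy
    rwa [Complex.dist_eq, sub_zero, not_lt] at this
  refine ⟨T, hTpos, ?_, ?_⟩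
  · -- part 1
    intro z hz hTz
    have hzU : z ∈ U := (key₁ z hz.1 hz.2 hTz).1
    refine ⟨connectedComponentIn U z, ⟨z, mem_connectedComponentIn hzU, rfl⟩, ?_⟩
    have hSU : {w ∈ A ∩ f ⁻¹' A | T ≤ ‖w‖} ⊆ U := by
      rintro w ⟨⟨hwA, hwfA⟩, hwT⟩
      exact (key₁ w hwA hwfA hwT).1
    exact connectedComponentIn_mono z hSU
  · -- part 2
    intro C hC hCconn hCball
    have hCU : ∀ y ∈ C \ Metric.ball (0 : ℂ) T, y ∈ U := by
      rintro y ⟨hyC, hyB⟩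
      exact (key₁ y (hC hyC).1 (hC hyC).2 (hball y hyB)).1
    set 𝒮 : Set (Set ℂ) := (fun y => connectedComponentIn U y) '' (C \ Metric.ball (0 : ℂ) T)
      with h𝒮
    have hFD : ∀ F ∈ 𝒮, IsFundamentalDomain f K Γ F := by
      rintro F ⟨y, hy, rfl⟩
      exact ⟨y, mem_connectedComponentIn (hCU y hy), rfl⟩
    have hcover : C \ Metric.ball (0 : ℂ) T ⊆ ⋃₀ 𝒮 := fun y hy =>
      ⟨connectedComponentIn U y, ⟨y, hy, rfl⟩, mem_connectedComponentIn (hCU y hy)⟩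
    have hfin : 𝒮.Finite := by
      by_contra hinf'
      have hinf : 𝒮.Infinite := hinf'
      set e : ℕ ↪ ↥𝒮 := hinf.natEmbedding 𝒮 with he
      set V : ℕ → Set ℂ := fun n => ((e n : ↥𝒮) : Set ℂ) with hV
      have hVmem : ∀ n, V n ∈ 𝒮 := fun n => (e n).2
      have hVinj : Function.Injective V := fun m n h =>
        e.injective (Subtype.coe_injective h)
      have hy' : ∀ n, ∃ y, y ∈ C \ Metric.ball (0 : ℂ) T ∧ connectedComponentIn U y = V n := by
        intro n
        obtain ⟨y, hy1, hy2⟩ := hVmem n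
        exact ⟨y, hy1, hy2⟩
      choose y hymem hyeq using hy'
      have hyC : ∀ n, y n ∈ C := fun n => (hymem n).1
      have hyU : ∀ n, y n ∈ U := fun n => hCU _ (hymem n)
      have hyQ : ∀ n, Q < ‖f (y n)‖ := fun n =>
        (key₁ _ (hC (hyC n)).1 (hC (hyC n)).2 (hball _ (hymem n).2)).2
      set O : ℕ → Set ℂ := fun n => V n ∩ {z : ℂ | Q < ‖f z‖} with hO
      have hOopen : ∀ n, IsOpen (O n) := by
        intro n
        have hVopen : IsOpen (V n) := by
          rw [← hyeq n]
          exact hUopen.connectedComponentIn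
        exact hVopen.inter (isOpen_lt continuous_const habsf)
      set E : ℕ → Set ℂ := fun n => C ∩ O n with hE
      have hEne : ∀ n, (E n).Nonempty := by
        intro n
        refine ⟨y n, hyC n, ?_, hyQ n⟩
        rw [← hyeq n]
        exact mem_connectedComponentIn (hyU n)
      have hnotsub : ∀ n, ¬ C ⊆ V n := by
        intro n hsub
        have h1 : y (n + 1) ∈ connectedComponentIn U (y n) := by
          rw [hyeq n]; exact hsub (hyC (n + 1))
        have h2 : V (n + 1) = V n := by
          rw [← hyeq (n + 1), ← hyeq n]
          exact (connectedComponentIn_eq h1).symm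
        exact Nat.succ_ne_self n (hVinj h2)
      -- attachment points
      have hzeta : ∀ n, ∃ ζ, ζ ∈ C ∧ ζ ∈ closure (E n) ∧ ζ ∉ E n := by
        intro n
        by_contra hcon
        push_neg at hcon
        obtain ⟨w, hwC, hwE⟩ : ∃ w, w ∈ C ∧ w ∉ E n := by
          by_contra hall
          push_neg at hall
          exact hnotsub n fun z hz => ((hall z hz).2).1
        have hcov : C ⊆ O n ∪ (closure (E n))ᶜ := by
          intro z hz
          by_cases hcl : z ∈ closure (E n)
          · exact Or.inl (hcon z hz hcl).2
          · exact Or.inr hcl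
        have hne1 : (C ∩ O n).Nonempty := by
          obtain ⟨x, hx⟩ := hEne n
          exact ⟨x, hx⟩
        have hne2 : (C ∩ (closure (E n))ᶜ).Nonempty := by
          refine ⟨w, hwC, fun hcl => hwE (hcon w hwC hcl)⟩
        obtain ⟨x, hxC, hxO, hxcl⟩ :=
          hCconn.isPreconnected (O n) (closure (E n))ᶜ (hOopen n)
            isClosed_closure.isOpen_compl hcov hne1 hne2
        exact hxcl (subset_closure ⟨hxC, hxO⟩)
      choose ζ hζC hζcl hζnE using hzeta
      have hclosQ : ∀ n, Q ≤ ‖f (ζ n)‖ := by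
        intro n
        have hsub : closure (E n) ⊆ {z : ℂ | Q ≤ ‖f z‖} :=
          closure_minimal (fun z hz => show Q ≤ ‖f z‖ from le_of_lt hz.2.2)
            (isClosed_le continuous_const habsf)
        exact hsub (hζcl n)
      have hζUK : ∀ n, ζ n ∈ U ∧ K + 1 < ‖f (f (ζ n))‖ := fun n =>
        key₂ _ (hC (hζC n)).1 (hC (hζC n)).2 (hclosQ n)
      have hζV : ∀ n, connectedComponentIn U (ζ n) = V n := by
        intro n
        obtain ⟨w, hw1, hw2⟩ := mem_closure_iff.mp (hζcl n) _
          hUopen.connectedComponentIn (mem_connectedComponentIn (hζUK n).1)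
        have hwy : w ∈ connectedComponentIn U (y n) := by
          rw [hyeq n]; exact hw2.2.1
        rw [connectedComponentIn_eq hw1, ← connectedComponentIn_eq hwy, hyeq n]
      have hζmemV : ∀ n, ζ n ∈ V n := fun n =>
        (hζV n) ▸ mem_connectedComponentIn (hζUK n).1
      have hζbdd : ∀ n, ζ n ∈ Metric.closedBall (0 : ℂ) R₂ := by
        intro n
        rw [Metric.mem_closedBall, Complex.dist_eq, sub_zero]
        by_contra hgt
        push_neg at hgt
        have hQlt : Q < ‖f (ζ n)‖ := hR₂ _ (hC (hζC n)).1 hgt.le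
        exact hζnE n ⟨hζC n, hζmemV n, hQlt⟩
      obtain ⟨ζ₀, hζ₀mem, φ, hφmono, hφtend⟩ :=
        (isCompact_closedBall (0 : ℂ) R₂).tendsto_subseq hζbdd
      have htf : Tendsto (fun n => ‖f (ζ (φ n))‖) atTop
          (𝓝 (‖f ζ₀‖)) := (habsf.tendsto ζ₀).comp hφtend
      have htff : Tendsto (fun n => ‖f (f (ζ (φ n)))‖) atTop
          (𝓝 (‖f (f ζ₀)‖)) :=
        ((habsf.comp hfc).tendsto ζ₀).comp hφtend
      have hQ₀ : Q ≤ ‖f ζ₀‖ :=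
        ge_of_tendsto' htf fun n => hclosQ (φ n)
      have hK₀ : K + 1 ≤ ‖f (f ζ₀)‖ :=
        ge_of_tendsto' htff fun n => (hζUK (φ n)).2.le
      have hζ₀U : ζ₀ ∈ U := by
        have hKfz : K < ‖f ζ₀‖ := by
          have : K + 2 ≤ Q := le_max_right _ _
          linarith
        have hnotΓ : f ζ₀ ∉ Γ := by
          intro hmem
          have hx : f ζ₀ ∈ Γ ∩ f ⁻¹' {z : ℂ | K < ‖z‖} :=
            ⟨hmem, by simp only [mem_preimage, mem_setOf_eq]; linarith⟩
          rw [hΓdisj] at hx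
          exact hx
        rw [hU]
        exact ⟨hKfz, hnotΓ⟩
      have hev : ∀ᶠ n in atTop, ζ (φ n) ∈ connectedComponentIn U ζ₀ :=
        hφtend.eventually (hUopen.connectedComponentIn.eventually_mem
          (mem_connectedComponentIn hζ₀U))
      rw [eventually_atTop] at hev
      obtain ⟨N, hN⟩ := hev
      have hVeq : ∀ m, N ≤ m → V (φ m) = connectedComponentIn U ζ₀ := by
        intro m hm
        rw [← hζV (φ m)]
        exact (connectedComponentIn_eq (hN m hm)).symm
      have : φ N = φ (N + 1) :=
        hVinj ((hVeq N le_rfl).trans (hVeq (N + 1) (Nat.le_succ N)).symm)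
      exact absurd (hφmono.injective this) (Nat.succ_ne_self N).symm
    obtain ⟨k, Femb, hFrange⟩ := hfin.fin_embedding
    refine ⟨k, fun j => Femb j, fun j => hFD _ (hFrange ▸ mem_range_self j), ?_⟩
    intro x hx
    obtain ⟨F, hF𝒮, hxF⟩ := hcover hx
    rw [← hFrange] at hF𝒮
    obtain ⟨j, rfl⟩ := hF𝒮
    exact mem_iUnion.mpr ⟨j, hxF⟩
end
end
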